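/- Every finite, nonempty, facet-connected configuration of unit squares in the integer grid ℤ² contains a corner module (a cell whose North and East neighbors are both empty, or South and East, or North and West, or South and West) whose removal leaves the remaining configuration facet-connected (or empty). -/

import Mathlib

/-- Two grid cells are facet-adjacent if they are at L¹-distance 1. -/
def adjCell (p q : ℤ × ℤ) : Prop :=
  (p.1 - q.1).natAbs + (p.2 - q.2).natAbs = 1

/-- A set of cells is facet-connected if any two of its cells are joined
by a path of facet-adjacent cells inside the set. -/
def connectedIn (C : Set (ℤ × ℤ)) : Prop :=
  ∀ p ∈ C, ∀ q ∈ C,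
    Relation.ReflTransGen (fun a b => a ∈ C ∧ b ∈ C ∧ adjCell a b) p q

/-- A corner: two consecutive cardinal neighbors are empty. -/
def isCorner (C : Set (ℤ × ℤ)) (c : ℤ × ℤ) : Prop :=
  (c + (0, 1) ∉ C ∧ c + (1, 0) ∉ C) ∨ (c + (0, -1) ∉ C ∧ c + (1, 0) ∉ C) ∨
  (c + (0, 1) ∉ C ∧ c + (-1, 0) ∉ C) ∨ (c + (0, -1) ∉ C ∧ c + (-1, 0) ∉ C)

/-- The potential Φ(x,y) = (x+y, x). -/
def Phi (c : ℤ × ℤ) : ℤ × ℤ := (c.1 + c.2, c.1)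

/-- Lexicographic order on ℤ × ℤ. -/
def lexLe (a b : ℤ × ℤ) : Prop := a.1 < b.1 ∨ (a.1 = b.1 ∧ a.2 ≤ b.2)

namespace NCC

abbrev Cell := ℤ × ℤ

def Rel (C : Set Cell) (a b : Cell) : Prop := a ∈ C ∧ b ∈ C ∧ adjCell a b

lemma connectedIn_def {C : Set Cell} :
    connectedIn C ↔ ∀ p ∈ C, ∀ q ∈ C, Relation.ReflTransGen (Rel C) p q := Iff.rfl

lemma adj_symm {a b : Cell} (h : adjCell a b) : adjCell b a := by
  unfold adjCell at *; omega

lemma adj_ne {a b : Cell} (h : adjCell a b) : a ≠ b := by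
  intro he; subst he; unfold adjCell at h; omega

lemma cell_add_fst (b d : Cell) : (b + d).1 = b.1 + d.1 := rfl
lemma cell_add_snd (b d : Cell) : (b + d).2 = b.2 + d.2 := rfl

lemma adj_add (x d : Cell) (hd : d.1.natAbs + d.2.natAbs = 1) : adjCell (x + d) x := by
  unfold adjCell; rw [cell_add_fst, cell_add_snd]; omega

lemma adj_cases {a b : Cell} (h : adjCell a b) :
    a = b + (0, 1) ∨ a = b + (0, -1) ∨ a = b + (1, 0) ∨ a = b + (-1, 0) := by
  unfold adjCell at h
  rcases Prod.mk.eta (p := a) ▸ (rfl : a = a) with _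
  have h1 : a.1 = b.1 + 1 ∨ a.1 = b.1 - 1 ∨ a.1 = b.1 := by omega
  have hcase : (a.1 = b.1 ∧ a.2 = b.2 + 1) ∨ (a.1 = b.1 ∧ a.2 = b.2 - 1) ∨
      (a.1 = b.1 + 1 ∧ a.2 = b.2) ∨ (a.1 = b.1 - 1 ∧ a.2 = b.2) := by omega
  rcases hcase with ⟨e1, e2⟩ | ⟨e1, e2⟩ | ⟨e1, e2⟩ | ⟨e1, e2⟩
  · exact Or.inl (Prod.ext_iff.mpr ⟨by rw [cell_add_fst]; omega, by rw [cell_add_snd]; omega⟩)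
  · exact Or.inr (Or.inl (Prod.ext_iff.mpr ⟨by rw [cell_add_fst]; omega, by rw [cell_add_snd]; omega⟩))
  · exact Or.inr (Or.inr (Or.inl (Prod.ext_iff.mpr ⟨by rw [cell_add_fst]; omega, by rw [cell_add_snd]; omega⟩)))
  · exact Or.inr (Or.inr (Or.inr (Prod.ext_iff.mpr ⟨by rw [cell_add_fst]; omega, by rw [cell_add_snd]; omega⟩)))

lemma rel_symm (C : Set Cell) : Symmetric (Rel C) :=
  fun _ _ h => ⟨h.2.1, h.1, adj_symm h.2.2⟩

lemma rtg_symm {C : Set Cell} {a b : Cell}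
    (h : Relation.ReflTransGen (Rel C) a b) : Relation.ReflTransGen (Rel C) b a :=
  by haveI : Std.Symm (Rel C) := ⟨fun _ _ h => rel_symm C h⟩; exact symm h

lemma rtg_mono {C D : Set Cell} (hsub : C ⊆ D) {a b : Cell}
    (h : Relation.ReflTransGen (Rel C) a b) : Relation.ReflTransGen (Rel D) a b :=
  Relation.ReflTransGen.mono (r := Rel C) (p := Rel D)
    (fun _ _ hr => (⟨hsub hr.1, hsub hr.2.1, hr.2.2⟩ : Rel D _ _)) _ _ h

lemma reach_nbr {C : Set Cell} {c : Cell} :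
    ∀ {p : Cell}, Relation.ReflTransGen (Rel C) p c → p ≠ c →
    ∃ n, n ∈ C ∧ adjCell n c ∧ Relation.ReflTransGen (Rel (C \ {c})) p n := by
  intro p h
  induction h using Relation.ReflTransGen.head_induction_on with
  | refl => intro h; exact absurd rfl h
  | @head a b h' htail ih =>
    intro hane
    by_cases hb : b = c
    · subst hb
      exact ⟨a, h'.1, h'.2.2, Relation.ReflTransGen.refl⟩
    · obtain ⟨nn, hn1, hn2, hn3⟩ := ih hb
      refine ⟨nn, hn1, hn2, Relation.ReflTransGen.head ?_ hn3⟩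
      exact ⟨⟨h'.1, hane⟩, ⟨h'.2.1, hb⟩, h'.2.2⟩

def Comp (C : Set Cell) (c n : Cell) : Set Cell :=
  {z | z ∈ C \ {c} ∧ Relation.ReflTransGen (Rel (C \ {c})) n z}

lemma comp_subset {C : Set Cell} {c n : Cell} : Comp C c n ⊆ C \ {c} := fun _ hz => hz.1

lemma mem_comp_self {C : Set Cell} {c n : Cell} (hn : n ∈ C \ {c}) : n ∈ Comp C c n :=
  ⟨hn, Relation.ReflTransGen.refl⟩

lemma comp_extend {C : Set Cell} {c n z w : Cell} (hz : z ∈ Comp C c n)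
    (hw : w ∈ C \ {c}) (hadj : adjCell z w) : w ∈ Comp C c n :=
  ⟨hw, hz.2.tail ⟨hz.1, hw, hadj⟩⟩

lemma chain_strengthen {D E : Set Cell} {n z : Cell}
    (h : Relation.ReflTransGen (Rel D) n z)
    (hE : ∀ w, w ∈ D → Relation.ReflTransGen (Rel D) n w → w ∈ E) :
    Relation.ReflTransGen (Rel E) n z := by
  induction h with
  | refl => exact Relation.ReflTransGen.refl
  | tail hnb hstep ih =>
    exact ih.tail ⟨hE _ hstep.1 hnb, hE _ hstep.2.1 (hnb.tail hstep), hstep.2.2⟩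

lemma comp_chain {C : Set Cell} {c n z : Cell} (hz : z ∈ Comp C c n) :
    Relation.ReflTransGen (Rel (Comp C c n)) n z :=
  chain_strengthen hz.2 (fun _ hw hreach => ⟨hw, hreach⟩)

lemma comp_disj {C : Set Cell} {c n1 n2 : Cell}
    (hsep : ¬ Relation.ReflTransGen (Rel (C \ {c})) n1 n2) :
    ∀ z, z ∈ Comp C c n1 → z ∈ Comp C c n2 → False :=
  fun _ h1 h2 => hsep (h1.2.trans (rtg_symm h2.2))

lemma cut_partition {C : Set Cell} {c n1 n2 : Cell}
    (hconn : connectedIn C) (hc : c ∈ C)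
    (honly : ∀ z ∈ C, adjCell z c → z = n1 ∨ z = n2) :
    ∀ p ∈ C \ {c}, p ∈ Comp C c n1 ∨ p ∈ Comp C c n2 := by
  intro p hp
  obtain ⟨nn, hnC, hadj, hpath⟩ := reach_nbr (hconn p hp.1 c hc) hp.2
  rcases honly nn hnC hadj with rfl | rfl
  · exact Or.inl ⟨hp, rtg_symm hpath⟩
  · exact Or.inr ⟨hp, rtg_symm hpath⟩

lemma cut_both {C : Set Cell} {c n1 n2 : Cell}
    (hconn : connectedIn C) (hc : c ∈ C)
    (honly : ∀ z ∈ C, adjCell z c → z = n1 ∨ z = n2)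
    (hdis : ¬ connectedIn (C \ {c})) :
    n1 ∈ C ∧ n2 ∈ C ∧ ¬ Relation.ReflTransGen (Rel (C \ {c})) n1 n2 := by
  rw [connectedIn_def] at hdis
  push_neg at hdis
  obtain ⟨p, hp, q, hq, hpq⟩ := hdis
  obtain ⟨np, hnpC, hnpadj, hppath⟩ := reach_nbr (hconn p hp.1 c hc) hp.2
  obtain ⟨nq, hnqC, hnqadj, hqpath⟩ := reach_nbr (hconn q hq.1 c hc) hq.2
  have hne : np ≠ nq := by
    intro he; subst he
    exact hpq (hppath.trans (rtg_symm hqpath))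
  rcases honly np hnpC hnpadj with rfl | rfl <;>
    rcases honly nq hnqC hnqadj with rfl | rfl
  · exact absurd rfl hne
  · exact ⟨hnpC, hnqC, fun hsep => hpq (hppath.trans (hsep.trans (rtg_symm hqpath)))⟩
  · exact ⟨hnqC, hnpC, fun hsep => hpq (hppath.trans ((rtg_symm hsep).trans (rtg_symm hqpath)))⟩
  · exact absurd rfl hne

section Transfer

variable {C : Set Cell} {c n1 n2 : Cell}

lemma connected_insert (hc : c ∈ C) (hn1c : adjCell n1 c) (hn1 : n1 ∈ C) :
    connectedIn (insert c (Comp C c n1)) := by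
  rw [connectedIn_def]
  have hn1K : n1 ∈ Comp C c n1 := mem_comp_self ⟨hn1, adj_ne hn1c⟩
  have to_c : ∀ p ∈ insert c (Comp C c n1),
      Relation.ReflTransGen (Rel (insert c (Comp C c n1))) p c := by
    intro p hp
    rcases hp with rfl | hpK
    · exact Relation.ReflTransGen.refl
    · have h1 : Relation.ReflTransGen (Rel (Comp C c n1)) n1 p := comp_chain hpK
      have h2 : Relation.ReflTransGen (Rel (insert c (Comp C c n1))) p n1 :=
        rtg_symm (rtg_mono (Set.subset_insert c (Comp C c n1)) h1)
      exact h2.tail ⟨Set.mem_insert_iff.mpr (Or.inr hn1K), Set.mem_insert _ _, hn1c⟩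
  intro p hp q hq
  exact (to_c p hp).trans (rtg_symm (to_c q hq))

lemma nbr_in (hc : c ∈ C) {c' v : Cell} (hc' : c' ∈ Comp C c n1)
    (hv : v ∈ C) (hadj : adjCell v c') : v ∈ insert c (Comp C c n1) := by
  by_cases hvc : v = c
  · exact hvc ▸ Set.mem_insert _ _
  · exact Set.mem_insert_iff.mpr (Or.inr (comp_extend hc' ⟨hv, hvc⟩ (adj_symm hadj)))

lemma corner_transfer (hc : c ∈ C) {c' : Cell} (hc' : c' ∈ Comp C c n1)
    (h : isCorner (insert c (Comp C c n1)) c') : isCorner C c' := by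
  have key : ∀ d : Cell, d.1.natAbs + d.2.natAbs = 1 →
      c' + d ∉ insert c (Comp C c n1) → c' + d ∉ C :=
    fun d hd h1 hC => h1 (nbr_in hc hc' hC (adj_add c' d hd))
  rcases h with ⟨h1, h2⟩ | ⟨h1, h2⟩ | ⟨h1, h2⟩ | ⟨h1, h2⟩
  · exact Or.inl ⟨key _ (by decide) h1, key _ (by decide) h2⟩
  · exact Or.inr (Or.inl ⟨key _ (by decide) h1, key _ (by decide) h2⟩)
  · exact Or.inr (Or.inr (Or.inl ⟨key _ (by decide) h1, key _ (by decide) h2⟩))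
  · exact Or.inr (Or.inr (Or.inr ⟨key _ (by decide) h1, key _ (by decide) h2⟩))

lemma noncut_transfer (hc : c ∈ C) (hn1c : adjCell n1 c) (hn2c : adjCell n2 c)
    (hn2 : n2 ∈ C)
    (hsep : ¬ Relation.ReflTransGen (Rel (C \ {c})) n1 n2)
    (hpart : ∀ p ∈ C \ {c}, p ∈ Comp C c n1 ∨ p ∈ Comp C c n2)
    {c' : Cell} (hc' : c' ∈ Comp C c n1)
    (hconn1 : connectedIn (insert c (Comp C c n1) \ {c'})) :
    connectedIn (C \ {c'}) := by
  have hc'ne : c' ≠ c := fun h => hc'.1.2 (Set.mem_singleton_iff.mpr h)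
  have hcmem : c ∈ C \ {c'} := ⟨hc, fun h => hc'ne (Set.mem_singleton_iff.mp h).symm⟩
  have hcmem' : c ∈ insert c (Comp C c n1) \ {c'} :=
    ⟨Set.mem_insert _ _, fun h => hc'ne (Set.mem_singleton_iff.mp h).symm⟩
  have hK2sub : Comp C c n2 ⊆ C \ {c'} := by
    intro z hz
    exact ⟨hz.1.1, fun he => comp_disj hsep z ((Set.mem_singleton_iff.mp he) ▸ hc') hz⟩
  have hC1sub : insert c (Comp C c n1) \ {c'} ⊆ C \ {c'} := by
    intro z hz
    refine ⟨?_, hz.2⟩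
    rcases hz.1 with rfl | hzK
    · exact hc
    · exact hzK.1.1
  rw [connectedIn_def]
  have to_c : ∀ p ∈ C \ {c'}, Relation.ReflTransGen (Rel (C \ {c'})) p c := by
    intro p hp
    by_cases hpc : p = c
    · exact hpc ▸ Relation.ReflTransGen.refl
    · have hp' : p ∈ C \ {c} := ⟨hp.1, hpc⟩
      rcases hpart p hp' with h1 | h2
      · have hpmem : p ∈ insert c (Comp C c n1) \ {c'} :=
          ⟨Set.mem_insert_iff.mpr (Or.inr h1), hp.2⟩
        exact rtg_mono hC1sub (hconn1 p hpmem c hcmem')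
      · have hchain : Relation.ReflTransGen (Rel (Comp C c n2)) n2 p := comp_chain h2
        have h3 : Relation.ReflTransGen (Rel (C \ {c'})) p n2 :=
          rtg_symm (rtg_mono hK2sub hchain)
        have hn2mem : n2 ∈ C \ {c'} := hK2sub (mem_comp_self ⟨hn2, adj_ne hn2c⟩)
        exact h3.tail ⟨hn2mem, hcmem, hn2c⟩
  intro p hp q hq
  exact (to_c p hp).trans (rtg_symm (to_c q hq))

end Transfer

lemma phi_fst (z : Cell) : (Phi z).1 = z.1 + z.2 := rfl
lemma phi_snd (z : Cell) : (Phi z).2 = z.1 := rfl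

lemma exists_phi_max {C : Set Cell} (hfin : C.Finite) (hne : C.Nonempty) :
    ∃ M ∈ C, ∀ z ∈ C, lexLe (Phi z) (Phi M) := by
  obtain ⟨M, hM, hmax⟩ := hfin.toFinset.exists_max_image (fun z => toLex (Phi z))
    (by rwa [Set.Finite.toFinset_nonempty])
  refine ⟨M, hfin.mem_toFinset.mp hM, fun z hz => ?_⟩
  have h := hmax z (hfin.mem_toFinset.mpr hz)
  rw [Prod.Lex.le_iff] at h
  exact h

lemma exists_phi_min {C : Set Cell} (hfin : C.Finite) (hne : C.Nonempty) :
    ∃ m ∈ C, ∀ z ∈ C, lexLe (Phi m) (Phi z) := by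
  obtain ⟨m, hm, hmin⟩ := hfin.toFinset.exists_min_image (fun z => toLex (Phi z))
    (by rwa [Set.Finite.toFinset_nonempty])
  refine ⟨m, hfin.mem_toFinset.mp hm, fun z hz => ?_⟩
  have h := hmin z (hfin.mem_toFinset.mpr hz)
  rw [Prod.Lex.le_iff] at h
  exact h

lemma max_N {C : Set Cell} {M : Cell} (hmax : ∀ z ∈ C, lexLe (Phi z) (Phi M)) :
    M + (0, 1) ∉ C := by
  intro h
  have h' := hmax _ h
  unfold lexLe at h'
  rw [phi_fst, phi_fst, phi_snd, phi_snd, cell_add_fst, cell_add_snd] at h'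
  simp only [] at h'
  omega

lemma max_E {C : Set Cell} {M : Cell} (hmax : ∀ z ∈ C, lexLe (Phi z) (Phi M)) :
    M + (1, 0) ∉ C := by
  intro h
  have h' := hmax _ h
  unfold lexLe at h'
  rw [phi_fst, phi_fst, phi_snd, phi_snd, cell_add_fst, cell_add_snd] at h'
  omega

lemma min_S {C : Set Cell} {m : Cell} (hmin : ∀ z ∈ C, lexLe (Phi m) (Phi z)) :
    m + (0, -1) ∉ C := by
  intro h
  have h' := hmin _ h
  unfold lexLe at h'
  rw [phi_fst, phi_fst, phi_snd, phi_snd, cell_add_fst, cell_add_snd] at h'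
  omega

lemma min_W {C : Set Cell} {m : Cell} (hmin : ∀ z ∈ C, lexLe (Phi m) (Phi z)) :
    m + (-1, 0) ∉ C := by
  intro h
  have h' := hmin _ h
  unfold lexLe at h'
  rw [phi_fst, phi_fst, phi_snd, phi_snd, cell_add_fst, cell_add_snd] at h'
  omega

lemma main_aux : ∀ n : ℕ, ∀ C : Set Cell, ∀ hfin : C.Finite,
    hfin.toFinset.card ≤ n → C.Nonempty → connectedIn C → ∀ x : Cell,
    ∃ c ∈ C, isCorner C c ∧ (C \ {c} = ∅ ∨ connectedIn (C \ {c})) ∧ (c ≠ x ∨ C ⊆ {x}) := by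
  intro n
  induction n with
  | zero =>
    intro C hfin hcard hne
    have : 0 < hfin.toFinset.card :=
      Finset.card_pos.mpr (Set.Finite.toFinset_nonempty hfin |>.mpr hne)
    omega
  | succ n ih =>
    intro C hfin hcard hne hconn x
    have key : ∀ c0 a b : Cell, c0 ∈ C → adjCell a c0 → adjCell b c0 →
        (∀ z ∈ C, adjCell z c0 → z = a ∨ z = b) → isCorner C c0 →
        ∀ y : Cell, y ≠ c0 →
        ∃ c ∈ C, isCorner C c ∧ (C \ {c} = ∅ ∨ connectedIn (C \ {c})) ∧ c ≠ y := by
      intro c0 a b hc0 hac hbc honly hcorner0 y hy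
      by_cases hcut : C \ {c0} = ∅ ∨ connectedIn (C \ {c0})
      · exact ⟨c0, hc0, hcorner0, hcut, fun h => hy h.symm⟩
      · push_neg at hcut
        obtain ⟨hne', hdis⟩ := hcut
        obtain ⟨haC, hbC, hsep⟩ := cut_both hconn hc0 honly hdis
        have hpart := cut_partition hconn hc0 honly
        have go : ∀ a b : Cell, a ∈ C → b ∈ C → adjCell a c0 → adjCell b c0 →
            ¬ Relation.ReflTransGen (Rel (C \ {c0})) a b →
            (∀ p ∈ C \ {c0}, p ∈ Comp C c0 a ∨ p ∈ Comp C c0 b) →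
            y ∉ Comp C c0 a →
            ∃ c ∈ C, isCorner C c ∧ (C \ {c} = ∅ ∨ connectedIn (C \ {c})) ∧ c ≠ y := by
          clear haC hbC hsep hac hbc
          intro a b haC hbC hac hbc hsep hpartab hyK
          have hsubC1 : insert c0 (Comp C c0 a) ⊆ C :=
            Set.insert_subset_iff.mpr ⟨hc0, fun z hz => hz.1.1⟩
          have hfin1 : (insert c0 (Comp C c0 a)).Finite := hfin.subset hsubC1
          have haK : a ∈ Comp C c0 a := mem_comp_self ⟨haC, fun h => adj_ne hac (Set.mem_singleton_iff.mp h)⟩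
          have hbnot : b ∉ insert c0 (Comp C c0 a) := by
            intro hmem
            rcases hmem with rfl | hbK
            · exact adj_ne hbc rfl
            · exact hsep hbK.2
          have hss : insert c0 (Comp C c0 a) ⊂ C :=
            (Set.ssubset_iff_of_subset hsubC1).mpr ⟨b, hbC, hbnot⟩
          have hcard1 : hfin1.toFinset.card ≤ n := by
            have := Finset.card_lt_card ((Set.Finite.toFinset_ssubset_toFinset (hs := hfin1) (ht := hfin)).mpr hss)
            omega
          have hconn1 : connectedIn (insert c0 (Comp C c0 a)) := connected_insert hc0 hac haC
          obtain ⟨c', hc'C1, hcor', hnc', hor⟩ :=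
            ih (insert c0 (Comp C c0 a)) hfin1 hcard1 ⟨c0, Set.mem_insert _ _⟩ hconn1 c0
          have hc'ne : c' ≠ c0 := by
            rcases hor with h | h
            · exact h
            · exact absurd (Set.mem_singleton_iff.mp (h (Set.mem_insert_iff.mpr (Or.inr haK))))
                (adj_ne hac)
          have hc'K : c' ∈ Comp C c0 a := by
            rcases hc'C1 with rfl | h
            · exact absurd rfl hc'ne
            · exact h
          have hnc'' : connectedIn (insert c0 (Comp C c0 a) \ {c'}) := by
            rcases hnc' with h | h
            · exfalso
              have : c0 ∈ insert c0 (Comp C c0 a) \ {c'} :=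
                ⟨Set.mem_insert _ _, fun hh => hc'ne (Set.mem_singleton_iff.mp hh).symm⟩
              rw [h] at this
              exact this
            · exact h
          refine ⟨c', hsubC1 hc'C1, corner_transfer hc0 hc'K hcor',
            Or.inr (noncut_transfer hc0 hac hbc hbC hsep hpartab hc'K hnc''),
            fun he => hyK (he ▸ hc'K)⟩
        by_cases hyK1 : y ∈ Comp C c0 a
        · exact go b a hbC haC hbc hac (fun h => hsep (rtg_symm h))
            (fun p hp => (hpart p hp).symm)
            (fun hy2 => comp_disj hsep y hyK1 hy2)
        · exact go a b haC hbC hac hbc hsep hpart hyK1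
    obtain ⟨M, hM, hmax⟩ := exists_phi_max hfin hne
    obtain ⟨m, hm, hmin⟩ := exists_phi_min hfin hne
    have hNM := max_N hmax
    have hEM := max_E hmax
    have hSm := min_S hmin
    have hWm := min_W hmin
    have hcorM : isCorner C M := Or.inl ⟨hNM, hEM⟩
    have hcorm : isCorner C m := Or.inr (Or.inr (Or.inr ⟨hSm, hWm⟩))
    have honlyM : ∀ z ∈ C, adjCell z M → z = M + (0, -1) ∨ z = M + (-1, 0) := by
      intro z hz hadj
      rcases adj_cases hadj with h | h | h | h
      · exact absurd (h ▸ hz) hNM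
      · exact Or.inl h
      · exact absurd (h ▸ hz) hEM
      · exact Or.inr h
    have honlym : ∀ z ∈ C, adjCell z m → z = m + (0, 1) ∨ z = m + (1, 0) := by
      intro z hz hadj
      rcases adj_cases hadj with h | h | h | h
      · exact Or.inl h
      · exact absurd (h ▸ hz) hSm
      · exact Or.inr h
      · exact absurd (h ▸ hz) hWm
    by_cases hx : x = M
    · subst hx
      by_cases hmM : m = x
      · subst hmM
        have hsub : C ⊆ {m} := by
          intro z hz
          have ha := hmax z hz
          have hb := hmin z hz
          unfold lexLe at ha hb
          rw [phi_fst, phi_fst, phi_snd, phi_snd] at ha hb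
          have h1 : z.1 = m.1 := by omega
          have h2 : z.2 = m.2 := by omega
          exact Set.mem_singleton_iff.mpr (Prod.ext_iff.mpr ⟨h1, h2⟩)
        exact ⟨m, hm, hcorm, Or.inl (Set.diff_eq_empty.mpr hsub), Or.inr hsub⟩
      · obtain ⟨c, hcC, h1, h2, h3⟩ :=
          key m (m + (0, 1)) (m + (1, 0)) hm (adj_add m (0, 1) (by decide))
            (adj_add m (1, 0) (by decide)) honlym hcorm x (fun h => hmM h.symm)
        exact ⟨c, hcC, h1, h2, Or.inl h3⟩
    · obtain ⟨c, hcC, h1, h2, h3⟩ :=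
        key M (M + (0, -1)) (M + (-1, 0)) hM (adj_add M (0, -1) (by decide))
          (adj_add M (-1, 0) (by decide)) honlyM hcorM x hx
      exact ⟨c, hcC, h1, h2, Or.inl h3⟩

end NCC

/-- every finite nonempty facet-connected configuration has a
corner whose removal leaves the configuration facet-connected (or empty). -/
theorem exists_noncut_corner (C : Set (ℤ × ℤ)) (hfin : C.Finite)
    (hne : C.Nonempty) (hconn : connectedIn C) :
    ∃ c ∈ C, isCorner C c ∧ (C \ {c} = ∅ ∨ connectedIn (C \ {c})) := by
  obtain ⟨c, hc, h1, h2, _⟩ :=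
    NCC.main_aux hfin.toFinset.card C hfin le_rfl hne hconn (0, 0)
  exact ⟨c, hc, h1, h2⟩
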